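/- Let φ be an endomorphism of a nonzero finite-dimensional complex normed vector space with spectral radius ρ(φ) > 0, and let s + 1 be the maximal size of the Jordan blocks of φ whose eigenvalue λ has |λ| = ρ(φ). Then ‖φⁿ‖/ρ(φ)ⁿ grows like nˢ: there exist constants 0 < c ≤ C and an integer N₀ such that c·nˢ ≤ ‖φⁿ‖/ρ(φ)ⁿ ≤ C·nˢ for all n ≥ N₀. -/

import Mathlib

open Filter Topology Module

set_option linter.unusedSectionVars false
set_option linter.unusedVariables false
set_option maxHeartbeats 1000000

section aux
variable {V : Type*} [NormedAddCommGroup V] [NormedSpace ℂ V] [FiniteDimensional ℂ V]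

lemma exists_gen_eig_projections (f : Module.End ℂ V) (Λ : Finset ℂ)
    (hΛ : ∀ μ : ℂ, f.maxGenEigenspace μ ≠ ⊥ → μ ∈ Λ) :
    ∃ P : ℂ → (V →ₗ[ℂ] V), (∀ μ x, P μ x ∈ f.maxGenEigenspace μ) ∧
      ∀ x : V, ∑ μ ∈ Λ, P μ x = x := by
  classical
  have internal : DirectSum.IsInternal (fun μ : ℂ => f.maxGenEigenspace μ) :=
    DirectSum.isInternal_submodule_of_iSupIndep_of_iSup_eq_top
      f.independent_maxGenEigenspace f.iSup_maxGenEigenspace_eq_top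
  letI : DirectSum.Decomposition (fun μ : ℂ => f.maxGenEigenspace μ) :=
    internal.chooseDecomposition
  refine ⟨fun μ => (f.maxGenEigenspace μ).subtype ∘ₗ
      (DirectSum.component ℂ ℂ (fun μ => f.maxGenEigenspace μ) μ) ∘ₗ
      (DirectSum.decomposeLinearEquiv (fun μ => f.maxGenEigenspace μ)).toLinearMap,
    fun μ x => by simp, fun x => ?_⟩
  have hsupp : (DirectSum.decompose (fun μ : ℂ => f.maxGenEigenspace μ) x).support ⊆ Λ := by
    intro μ hμ
    rw [DFinsupp.mem_support_iff] at hμ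
    refine hΛ μ (fun hbot => hμ ?_)
    have h1 := (DirectSum.decompose (fun μ : ℂ => f.maxGenEigenspace μ) x μ).2
    have h2 : ((DirectSum.decompose (fun μ : ℂ => f.maxGenEigenspace μ) x μ : V))
        ∈ (⊥ : Submodule ℂ V) := by rw [← hbot]; exact h1
    exact Submodule.coe_eq_zero.mp ((Submodule.mem_bot ℂ).mp h2)
  have := DirectSum.sum_support_decompose (fun μ : ℂ => f.maxGenEigenspace μ) x
  calc ∑ μ ∈ Λ, _ = ∑ μ ∈ (DirectSum.decompose (fun μ : ℂ => f.maxGenEigenspace μ) x).support,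
        ((DirectSum.decompose (fun μ : ℂ => f.maxGenEigenspace μ) x μ : V)) := by
        refine (Finset.sum_subset hsupp ?_).symm
        intro μ _ hμ
        rw [DFinsupp.notMem_support_iff] at hμ
        simp only [LinearMap.comp_apply, LinearEquiv.coe_coe,
          DirectSum.decomposeLinearEquiv_apply, Submodule.coe_subtype,
          ← DirectSum.apply_eq_component, hμ, ZeroMemClass.coe_zero]
    _ = x := this

lemma chain_mem_le_finrank (g : Module.End ℂ V) {k : ℕ}
    (hk : LinearMap.ker (g ^ k) ≠ LinearMap.ker (g ^ (k - 1))) :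
    k ≤ finrank ℂ V := by
  have hne : ∀ i, i < k → LinearMap.ker (g ^ i) ≠ LinearMap.ker (g ^ (i + 1)) := by
    intro i hi h
    apply hk
    have h1 := Module.End.ker_pow_constant h
    have e1 : LinearMap.ker (g ^ k) = LinearMap.ker (g ^ i) := by
      have := h1 (k - i); rwa [Nat.add_sub_cancel' hi.le, eq_comm] at this
    have e2 : LinearMap.ker (g ^ (k - 1)) = LinearMap.ker (g ^ i) := by
      have := h1 (k - 1 - i)
      rwa [Nat.add_sub_cancel' (Nat.le_sub_one_of_lt hi), eq_comm] at this
    rw [e1, e2]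
  have hmono : ∀ i, i ≤ k → i ≤ finrank ℂ (LinearMap.ker (g ^ i)) := by
    intro i
    induction i with
    | zero => simp
    | succ i ih =>
      intro hik
      have hle : LinearMap.ker (g ^ i) ≤ LinearMap.ker (g ^ (i + 1)) := by
        rw [pow_succ']
        exact LinearMap.ker_le_ker_comp _ _
      have h1 : LinearMap.ker (g ^ i) < LinearMap.ker (g ^ (i + 1)) :=
        lt_of_le_of_ne hle (hne i (by omega))
      have h2 := Submodule.finrank_lt_finrank_of_lt h1
      have h3 := ih (by omega)
      omega
  exact (hmono k le_rfl).trans (Submodule.finrank_le _)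

lemma ker_chain_spec (f : Module.End ℂ V) (μ : ℂ) (hμ : f.HasEigenvalue μ)
    (m : ℕ) (hm : m = sSup {k : ℕ | LinearMap.ker ((f - μ • 1) ^ k) ≠
      LinearMap.ker ((f - μ • 1) ^ (k - 1))}) :
    1 ≤ m ∧ m ≤ finrank ℂ V ∧
      f.maxGenEigenspace μ = LinearMap.ker ((f - μ • 1) ^ m) ∧
      LinearMap.ker ((f - μ • 1) ^ (m - 1)) ≠ LinearMap.ker ((f - μ • 1) ^ m) := by
  set g := f - μ • (1 : Module.End ℂ V) with hg
  set S := {k : ℕ | LinearMap.ker (g ^ k) ≠ LinearMap.ker (g ^ (k - 1))} with hS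
  have hbdd : BddAbove S := ⟨finrank ℂ V, fun k hk => chain_mem_le_finrank g hk⟩
  have h1S : 1 ∈ S := by
    simp only [hS, Set.mem_setOf_eq, pow_one, Nat.sub_self, pow_zero]
    rw [show LinearMap.ker (1 : Module.End ℂ V) = ⊥ from LinearMap.ker_id]
    have : f.eigenspace μ ≠ ⊥ := hμ
    rwa [Module.End.eigenspace_def] at this
  have hne : S.Nonempty := ⟨1, h1S⟩
  have hmem : m ∈ S := hm ▸ Nat.sSup_mem hne hbdd
  have h1m : 1 ≤ m := hm ▸ le_csSup hbdd h1S
  have hfin : m ≤ finrank ℂ V := chain_mem_le_finrank g hmem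
  have hstab : LinearMap.ker (g ^ m) = LinearMap.ker (g ^ (m + 1)) := by
    by_contra h
    have : m + 1 ∈ S := by
      simp only [hS, Set.mem_setOf_eq, Nat.add_sub_cancel]
      exact fun hh => h hh.symm
    have := hm ▸ le_csSup hbdd this
    omega
  refine ⟨h1m, hfin, ?_, fun h => hmem h.symm⟩
  have hconst := Module.End.ker_pow_constant hstab
  rw [Module.End.maxGenEigenspace_eq_genEigenspace_finrank, Module.End.genEigenspace_nat]
  rw [show finrank ℂ V = m + (finrank ℂ V - m) by omega]
  exact (hconst _).symm

lemma iterate_apply_eq_sum (f : Module.End ℂ V) (μ : ℂ) (mμ : ℕ)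
    {y : V} (hy : y ∈ LinearMap.ker ((f - μ • 1) ^ mμ)) {n : ℕ} (hn : mμ ≤ n + 1) :
    (f ^ n) y = ∑ j ∈ Finset.range mμ,
      ((n.choose j : ℂ) * μ ^ (n - j)) • ((f - μ • 1) ^ j) y := by
  set g := f - μ • (1 : Module.End ℂ V) with hg
  have hcomm : Commute g (μ • (1 : Module.End ℂ V)) := (Commute.one_right g).smul_right μ
  have hf : f = g + μ • 1 := by rw [hg]; abel
  have hyj : ∀ j, mμ ≤ j → (g ^ j) y = 0 := by
    intro j hj
    rw [LinearMap.mem_ker] at hy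
    rw [show j = j - mμ + mμ by omega, pow_add, Module.End.mul_apply, hy, map_zero]
  have expand : (f ^ n) y = ∑ j ∈ Finset.range (n + 1),
      ((n.choose j : ℂ) * μ ^ (n - j)) • ((f - μ • 1) ^ j) y := by
    conv_lhs => rw [hf, hcomm.add_pow, LinearMap.sum_apply]
    refine Finset.sum_congr rfl fun j hj => ?_
    simp only [Module.End.mul_apply, smul_pow, one_pow, LinearMap.smul_apply,
      Module.End.one_apply, Module.End.natCast_apply, map_nsmul,
      ← Nat.cast_smul_eq_nsmul ℂ, smul_smul, ← hg]
    rw [mul_comm, map_smul]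
  rw [expand]
  refine (Finset.sum_subset (Finset.range_subset_range.mpr hn) fun j _ hj => ?_).symm
  rw [Finset.mem_range, not_lt] at hj
  rw [← hg, hyj j hj, smul_zero]

lemma clm_pow_coe (φ : V →L[ℂ] V) (n : ℕ) :
    ((φ ^ n : V →L[ℂ] V) : V →ₗ[ℂ] V) = (φ : V →ₗ[ℂ] V) ^ n := by
  induction n with
  | zero => rfl
  | succ n ih => rw [pow_succ, pow_succ, ← ih]; rfl

lemma linmap_norm_le (L : V →ₗ[ℂ] V) : ∃ K : ℝ, 0 ≤ K ∧ ∀ x, ‖L x‖ ≤ K * ‖x‖ := by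
  refine ⟨‖LinearMap.toContinuousLinearMap L‖, norm_nonneg _, fun x => ?_⟩
  have := (LinearMap.toContinuousLinearMap L).le_opNorm x
  simpa using this

end aux

lemma term_upper_bound {r : ℝ} (hrpos : 0 < r) {w : ℝ} (hw0 : 0 ≤ w)
    (hwr : w ≤ r) (s j : ℕ) (hj : w = r → j ≤ s) :
    ∃ B : ℝ, 0 ≤ B ∧ ∀ᶠ n : ℕ in atTop,
      (n.choose j : ℝ) * w ^ (n - j) ≤ B * (n : ℝ) ^ s * r ^ n := by
  rcases eq_or_lt_of_le hwr with heq | hlt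
  · subst heq
    refine ⟨(w ^ j)⁻¹, by positivity, ?_⟩
    filter_upwards [eventually_ge_atTop (max j 1)] with n hn
    have hn1 : (1 : ℝ) ≤ (n : ℝ) := by
      have : 1 ≤ n := le_of_max_le_right hn
      exact_mod_cast this
    have h1 : (n.choose j : ℝ) ≤ (n : ℝ) ^ s := by
      calc (n.choose j : ℝ) ≤ (n : ℝ) ^ j := by exact_mod_cast Nat.choose_le_pow n j
        _ ≤ (n : ℝ) ^ s := pow_le_pow_right₀ hn1 (hj rfl)
    have h2 : w ^ (n - j) = w ^ n / w ^ j :=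
      pow_sub₀ w (ne_of_gt hrpos) (le_of_max_le_left hn)
    rw [h2]
    calc (n.choose j : ℝ) * (w ^ n / w ^ j)
        ≤ (n : ℝ) ^ s * (w ^ n / w ^ j) :=
          mul_le_mul_of_nonneg_right h1 (by positivity)
      _ = (w ^ j)⁻¹ * (n : ℝ) ^ s * w ^ n := by ring
  · refine ⟨1, zero_le_one, ?_⟩
    rcases eq_or_lt_of_le hw0 with hw | hw
    · filter_upwards [eventually_ge_atTop (j + 1)] with n hn
      rw [← hw, zero_pow (by omega)]
      have : (0:ℝ) ≤ (n:ℝ) ^ s * r ^ n := by positivity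
      nlinarith
    · have hq0 : (0:ℝ) ≤ w / r := by positivity
      have hq1 : w / r < 1 := (div_lt_one hrpos).mpr hlt
      have htend := tendsto_pow_const_mul_const_pow_of_lt_one j hq0 hq1
      have hev : ∀ᶠ n : ℕ in atTop, (n : ℝ) ^ j * (w / r) ^ n < w ^ j :=
        htend.eventually (gt_mem_nhds (by positivity))
      filter_upwards [hev, eventually_ge_atTop (max j 1)] with n h1 hn
      have hn1 : (1 : ℝ) ≤ (n : ℝ) := by
        have : 1 ≤ n := le_of_max_le_right hn
        exact_mod_cast this
      have hwn : w ^ (n - j) = w ^ n / w ^ j :=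
        pow_sub₀ w (ne_of_gt hw) (le_of_max_le_left hn)
      have hqr : (w / r) ^ n * r ^ n = w ^ n := by
        rw [div_pow, div_mul_cancel₀]
        positivity
      have hch : (n.choose j : ℝ) ≤ (n : ℝ) ^ j := by
        exact_mod_cast Nat.choose_le_pow n j
      have key : (n.choose j : ℝ) * w ^ (n - j) ≤ r ^ n := by
        rw [hwn, ← mul_div_assoc, div_le_iff₀ (by positivity : (0:ℝ) < w ^ j)]
        calc (n.choose j : ℝ) * w ^ n
            ≤ (n : ℝ) ^ j * w ^ n := by
              apply mul_le_mul_of_nonneg_right hch (by positivity)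
          _ = ((n : ℝ) ^ j * (w / r) ^ n) * r ^ n := by rw [mul_assoc, hqr]
          _ ≤ w ^ j * r ^ n := by
              apply mul_le_mul_of_nonneg_right h1.le (by positivity)
          _ = r ^ n * w ^ j := by ring
      calc (n.choose j : ℝ) * w ^ (n - j) ≤ r ^ n := key
        _ ≤ (n : ℝ) ^ s * r ^ n := by
            nlinarith [one_le_pow₀ hn1 (n := s), pow_pos hrpos n]
        _ = 1 * (n : ℝ) ^ s * r ^ n := by ring

lemma lower_calc {r : ℝ} (hrpos : 0 < r) (s : ℕ) {a D : ℝ} (ha : 0 < a) (hD : 0 ≤ D)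
    (hDs : s = 0 → D = 0) :
    ∃ c : ℝ, 0 < c ∧ ∀ᶠ n : ℕ in atTop,
      c * (n:ℝ)^s * r^n ≤ (n.choose s : ℝ) * r^(n-s) * a - (n:ℝ)^(s-1) * r^n * D := by
  set α := a / (2^s * (s.factorial : ℝ) * r^s) with hα'
  have hα : 0 < α := by positivity
  refine ⟨α/2, by positivity, ?_⟩
  obtain ⟨N, hN⟩ := exists_nat_ge (2 * D / α)
  filter_upwards [eventually_ge_atTop (max (2*s) (max N 1))] with n hn
  have hns : 2*s ≤ n := le_of_max_le_left hn
  have hn1 : 1 ≤ n := le_of_max_le_right (le_of_max_le_right hn)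
  have hnN : (2*D/α : ℝ) ≤ (n:ℝ) := by
    refine hN.trans ?_
    exact_mod_cast le_of_max_le_left (le_of_max_le_right hn)
  have hsn : s ≤ n := by omega
  have hcast : ((n + 1 - s : ℕ) : ℝ) = (n:ℝ) + 1 - (s:ℝ) := by
    rw [Nat.cast_sub (by omega)]; push_cast; ring
  have hs2 : (2:ℝ) * (s:ℝ) ≤ (n:ℝ) := by exact_mod_cast hns
  have h1 : ((n:ℝ)/2)^s / (s.factorial : ℝ) ≤ (n.choose s : ℝ) := by
    have hle : ((n:ℝ)/2)^s ≤ ((n + 1 - s : ℕ) : ℝ)^s := by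
      apply pow_le_pow_left₀ (by positivity)
      rw [hcast]; linarith
    have h2 : (((n + 1 - s : ℕ) : ℝ))^s / (s.factorial : ℝ) ≤ (n.choose s : ℝ) := by
      exact_mod_cast Nat.pow_le_choose s n
    exact le_trans (by gcongr) h2
  have hrn : r ^ (n - s) = r ^ n / r ^ s := pow_sub₀ r (ne_of_gt hrpos) hsn
  have hchoose : α * (n:ℝ)^s * r^n ≤ (n.choose s : ℝ) * r^(n-s) * a := by
    rw [hrn]
    have heq : α * (n:ℝ)^s * r^n = (((n:ℝ)/2)^s / (s.factorial : ℝ)) * (r^n / r^s) * a := by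
      rw [hα']; field_simp; rw [← mul_pow]; congr 1; ring
    rw [heq]
    have : (0:ℝ) < r^n / r^s := by positivity
    nlinarith [mul_le_mul_of_nonneg_right h1 this.le, ha.le]
  have hD2 : (n:ℝ)^(s-1) * r^n * D ≤ (α/2) * (n:ℝ)^s * r^n := by
    rcases Nat.eq_zero_or_pos s with hs | hs
    · rw [hDs hs, hs]
      simp only [pow_zero, Nat.zero_sub, mul_zero, mul_one]
      positivity
    · obtain ⟨s', rfl⟩ : ∃ s', s = s' + 1 := ⟨s - 1, by omega⟩
      have h3 : D ≤ (α/2) * (n:ℝ) := by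
        rw [div_le_iff₀ hα] at hnN; nlinarith
      simp only [Nat.add_sub_cancel]
      calc (n:ℝ)^s' * r^n * D ≤ (n:ℝ)^s' * r^n * ((α/2) * (n:ℝ)) := by
            apply mul_le_mul_of_nonneg_left h3 (by positivity)
        _ = (α/2) * (n:ℝ)^(s'+1) * r^n := by ring
  linarith

theorem norm_growth_of_iterates_equiv_pow
    {V : Type*} [NormedAddCommGroup V] [NormedSpace ℂ V]
    [FiniteDimensional ℂ V] [Nontrivial V] (φ : V →L[ℂ] V) (r : ℝ)
    (hr : IsGreatest {x : ℝ | ∃ lam : ℂ,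
      Module.End.HasEigenvalue (φ.toLinearMap : Module.End ℂ V) lam ∧ x = ‖lam‖} r)
    (hrpos : 0 < r) (s : ℕ)
    (hs : s + 1 = sSup {m : ℕ | ∃ lam : ℂ,
        Module.End.HasEigenvalue (φ.toLinearMap : Module.End ℂ V) lam ∧ ‖lam‖ = r ∧
        m = sSup {k : ℕ |
          LinearMap.ker (((φ.toLinearMap : Module.End ℂ V) - lam • 1) ^ k) ≠
          LinearMap.ker (((φ.toLinearMap : Module.End ℂ V) - lam • 1) ^ (k - 1))}}) :
    ∃ (c C : ℝ) (N₀ : ℕ), 0 < c ∧ c ≤ C ∧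
      ∀ n : ℕ, N₀ ≤ n →
        c * (n : ℝ) ^ s ≤ ‖φ ^ n‖ / r ^ n ∧ ‖φ ^ n‖ / r ^ n ≤ C * (n : ℝ) ^ s := by
  classical
  set f : Module.End ℂ V := φ.toLinearMap with hfdef
  set m : ℂ → ℕ := fun μ => sSup {k : ℕ | LinearMap.ker ((f - μ • 1) ^ k) ≠
      LinearMap.ker ((f - μ • 1) ^ (k - 1))} with hmdef
  have hs' : s + 1 = sSup {mm : ℕ | ∃ lam : ℂ,
      f.HasEigenvalue lam ∧ ‖lam‖ = r ∧ mm = m lam} := hs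
  -- the eigenvalue finset
  set Λ : Finset ℂ := (minpoly ℂ f).roots.toFinset with hΛdef
  have hmp : minpoly ℂ f ≠ 0 := minpoly.ne_zero <| .of_finite ℂ f
  have heig : ∀ μ : ℂ, f.HasEigenvalue μ ↔ μ ∈ Λ := by
    intro μ
    rw [Module.End.hasEigenvalue_iff_isRoot, hΛdef, Multiset.mem_toFinset,
      Polynomial.mem_roots hmp]
  -- spec of m
  have hspec : ∀ μ : ℂ, f.HasEigenvalue μ → 1 ≤ m μ ∧ m μ ≤ finrank ℂ V ∧
      f.maxGenEigenspace μ = LinearMap.ker ((f - μ • 1) ^ (m μ)) ∧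
      LinearMap.ker ((f - μ • 1) ^ (m μ - 1)) ≠ LinearMap.ker ((f - μ • 1) ^ (m μ)) :=
    fun μ hμ => ker_chain_spec f μ hμ (m μ) rfl
  -- the set T of block sizes on the spectral circle
  have hTbdd : BddAbove {mm : ℕ | ∃ lam : ℂ, f.HasEigenvalue lam ∧ ‖lam‖ = r ∧ mm = m lam} := by
    refine ⟨finrank ℂ V, ?_⟩
    rintro mm ⟨lam, hlam, -, rfl⟩
    exact (hspec lam hlam).2.1
  have hTne : {mm : ℕ | ∃ lam : ℂ, f.HasEigenvalue lam ∧ ‖lam‖ = r ∧ mm = m lam}.Nonempty := by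
    obtain ⟨lam, hlam, hlamr⟩ := hr.1
    exact ⟨m lam, lam, hlam, hlamr.symm, rfl⟩
  obtain ⟨μ₀, hμ₀eig, hμ₀r, hμ₀m⟩ :
      ∃ lam : ℂ, f.HasEigenvalue lam ∧ ‖lam‖ = r ∧ s + 1 = m lam := by
    have := Nat.sSup_mem hTne hTbdd
    rw [← hs'] at this
    exact this
  have hmle : ∀ μ : ℂ, f.HasEigenvalue μ → ‖μ‖ = r → m μ ≤ s + 1 := by
    intro μ hμ hμr
    rw [hs']
    exact le_csSup hTbdd ⟨μ, hμ, hμr, rfl⟩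
  -- projections
  obtain ⟨P, hPmem, hPsum⟩ := exists_gen_eig_projections f Λ (by
    intro μ hbot
    have hne : f.genEigenspace μ (finrank ℂ V) ≠ ⊥ := by
      rw [← Module.End.maxGenEigenspace_eq_genEigenspace_finrank]; exact hbot
    exact (heig μ).mp (Module.End.hasEigenvalue_of_hasGenEigenvalue
      (k := finrank ℂ V) hne))
  -- norms of auxiliary maps
  have hKex : ∀ (μ : ℂ) (j : ℕ), ∃ K : ℝ, 0 ≤ K ∧
      ∀ x, ‖((f - μ • 1) ^ j) (P μ x)‖ ≤ K * ‖x‖ := by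
    intro μ j
    obtain ⟨K, hK0, hKle⟩ := linmap_norm_le (((f - μ • 1) ^ j) ∘ₗ P μ)
    exact ⟨K, hK0, fun x => hKle x⟩
  choose K hK0 hKle using hKex
  have hterm : ∀ (μ : ℂ) (j : ℕ), ∃ B : ℝ, 0 ≤ B ∧ ((μ ∈ Λ ∧ j < m μ) →
      ∀ᶠ n : ℕ in atTop, (n.choose j : ℝ) * ‖μ‖ ^ (n - j) ≤ B * (n : ℝ) ^ s * r ^ n) := by
    intro μ j
    by_cases h : μ ∈ Λ ∧ j < m μ
    · obtain ⟨B, hB0, hBev⟩ := term_upper_bound hrpos (norm_nonneg μ)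
        (hr.2 ⟨μ, (heig μ).mpr h.1, rfl⟩) s j (fun hμr => by
          have h1 := hmle μ ((heig μ).mpr h.1) hμr
          omega)
      exact ⟨B, hB0, fun _ => hBev⟩
    · exact ⟨0, le_rfl, fun hh => absurd hh h⟩
  choose B hB0 hBev using hterm
  set C₀ : ℝ := ∑ μ ∈ Λ, (∑ j ∈ Finset.range (m μ), K μ j * B μ j) with hC₀
  have hC₀0 : 0 ≤ C₀ := Finset.sum_nonneg fun μ _ => Finset.sum_nonneg fun j _ =>
    mul_nonneg (hK0 μ j) (hB0 μ j)
  -- eventual upper bound for the operator norm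
  have hupper : ∀ᶠ n : ℕ in atTop, ‖φ ^ n‖ ≤ C₀ * (n:ℝ)^s * r^n := by
    have hALL : ∀ᶠ n : ℕ in atTop, ∀ μ ∈ Λ, ∀ j ∈ Finset.range (m μ),
        (n.choose j : ℝ) * ‖μ‖ ^ (n - j) ≤ B μ j * (n : ℝ) ^ s * r ^ n := by
      rw [Filter.eventually_all_finset]
      intro μ hμ
      rw [Filter.eventually_all_finset]
      intro j hj
      exact hBev μ j ⟨hμ, Finset.mem_range.mp hj⟩
    filter_upwards [hALL, eventually_ge_atTop (finrank ℂ V)] with n hall hn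
    have hbound : ∀ x : V, ‖(φ ^ n) x‖ ≤ (C₀ * (n:ℝ)^s * r^n) * ‖x‖ := by
      intro x
      have hxeq : (φ ^ n) x = ∑ μ ∈ Λ, (f ^ n) (P μ x) := by
        have h1 : (φ ^ n) x = (f ^ n) x := by
          rw [show (f ^ n) x = ((φ ^ n : V →L[ℂ] V) : V →ₗ[ℂ] V) x from by rw [clm_pow_coe]]
          rfl
        rw [h1]
        conv_lhs => rw [← hPsum x]
        rw [map_sum]
      rw [hxeq]
      refine (norm_sum_le _ _).trans ?_
      have hstep : ∀ μ ∈ Λ, ‖(f ^ n) (P μ x)‖ ≤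
          (∑ j ∈ Finset.range (m μ), K μ j * B μ j) * ((n:ℝ)^s * r^n * ‖x‖) := by
        intro μ hμ
        have hμeig := (heig μ).mpr hμ
        have hmem : P μ x ∈ LinearMap.ker ((f - μ • 1) ^ (m μ)) := by
          rw [← (hspec μ hμeig).2.2.1]
          exact hPmem μ x
        rw [iterate_apply_eq_sum f μ (m μ) hmem (le_trans ((hspec μ hμeig).2.1) (by omega))]
        refine (norm_sum_le _ _).trans ?_
        rw [Finset.sum_mul]
        refine Finset.sum_le_sum fun j hj => ?_
        have h1 : ‖((n.choose j : ℂ) * μ ^ (n - j)) • ((f - μ • 1) ^ j) (P μ x)‖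
            = ((n.choose j : ℝ) * ‖μ‖ ^ (n - j)) * ‖((f - μ • 1) ^ j) (P μ x)‖ := by
          rw [norm_smul, norm_mul, norm_pow, Complex.norm_natCast]
        rw [h1]
        calc ((n.choose j : ℝ) * ‖μ‖ ^ (n - j)) * ‖((f - μ • 1) ^ j) (P μ x)‖
            ≤ (B μ j * (n : ℝ) ^ s * r ^ n) * (K μ j * ‖x‖) := by
              refine mul_le_mul (hall μ hμ j hj) (hKle μ j x) (norm_nonneg _) ?_
              have := hB0 μ j
              positivity
          _ = K μ j * B μ j * ((n:ℝ)^s * r^n * ‖x‖) := by ring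
      calc ∑ μ ∈ Λ, ‖(f ^ n) (P μ x)‖
          ≤ ∑ μ ∈ Λ, (∑ j ∈ Finset.range (m μ), K μ j * B μ j) * ((n:ℝ)^s * r^n * ‖x‖) :=
            Finset.sum_le_sum hstep
        _ = (C₀ * (n:ℝ)^s * r^n) * ‖x‖ := by
            rw [← Finset.sum_mul]
            ring
    exact ContinuousLinearMap.opNorm_le_bound _ (by positivity) hbound
  -- lower bound
  set g₀ : Module.End ℂ V := f - μ₀ • 1 with hg₀
  have hker : LinearMap.ker (g₀ ^ s) < LinearMap.ker (g₀ ^ (s+1)) := by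
    have h := (hspec μ₀ hμ₀eig).2.2.2
    rw [← hμ₀m] at h
    simp only [Nat.add_sub_cancel] at h
    refine lt_of_le_of_ne ?_ h
    rw [pow_succ']
    exact LinearMap.ker_le_ker_comp _ _
  obtain ⟨v, hv1, hv2⟩ := SetLike.exists_of_lt hker
  have ha : 0 < ‖(g₀ ^ s) v‖ := by
    rw [norm_pos_iff]
    intro h0
    exact hv2 (LinearMap.mem_ker.mpr h0)
  have hvne : v ≠ 0 := by
    intro h
    apply hv2
    rw [h]
    simp
  have hvpos : 0 < ‖v‖ := norm_pos_iff.mpr hvne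
  set D : ℝ := ∑ j ∈ Finset.range s, (r ^ j)⁻¹ * ‖(g₀ ^ j) v‖ with hD
  have hD0 : 0 ≤ D := Finset.sum_nonneg fun j _ => by positivity
  have hDs : s = 0 → D = 0 := fun h => by rw [hD, h]; simp
  obtain ⟨c₁, hc₁pos, hc₁ev⟩ := lower_calc hrpos s ha hD0 hDs
  have hlower : ∀ᶠ n : ℕ in atTop, (c₁ / ‖v‖) * (n:ℝ)^s * r^n ≤ ‖φ ^ n‖ := by
    filter_upwards [hc₁ev, eventually_ge_atTop (s+1)] with n hc₁ hn
    have hexp := iterate_apply_eq_sum f μ₀ (s+1) hv1 (n := n) (by omega)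
    rw [Finset.sum_range_succ] at hexp
    rw [← hg₀] at hexp
    set T : V := ((n.choose s : ℂ) * μ₀ ^ (n - s)) • (g₀ ^ s) v with hT
    set R : V := ∑ j ∈ Finset.range s, ((n.choose j : ℂ) * μ₀ ^ (n - j)) • (g₀ ^ j) v with hR
    have hTnorm : ‖T‖ = (n.choose s : ℝ) * r^(n-s) * ‖(g₀ ^ s) v‖ := by
      rw [hT, norm_smul, norm_mul, norm_pow, Complex.norm_natCast, hμ₀r]
    have hRnorm : ‖R‖ ≤ (n:ℝ)^(s-1) * r^n * D := by
      rw [hR]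
      refine (norm_sum_le _ _).trans ?_
      rw [hD, Finset.mul_sum]
      refine Finset.sum_le_sum fun j hj => ?_
      have hj' : j < s := Finset.mem_range.mp hj
      have h1 : ‖((n.choose j : ℂ) * μ₀ ^ (n - j)) • ((g₀) ^ j) v‖
          = (n.choose j : ℝ) * r ^ (n - j) * ‖(g₀ ^ j) v‖ := by
        rw [norm_smul, norm_mul, norm_pow, Complex.norm_natCast, hμ₀r]
      rw [h1]
      have hch : (n.choose j : ℝ) ≤ (n:ℝ)^(s-1) := by
        have hn1 : (1:ℝ) ≤ (n:ℝ) := by exact_mod_cast (by omega : 1 ≤ n)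
        calc (n.choose j : ℝ) ≤ (n:ℝ)^j := by exact_mod_cast Nat.choose_le_pow n j
          _ ≤ (n:ℝ)^(s-1) := pow_le_pow_right₀ hn1 (by omega)
      have hrw : r ^ (n - j) = r ^ n * (r ^ j)⁻¹ := by
        rw [pow_sub₀ r (ne_of_gt hrpos) (by omega : j ≤ n)]
        try ring
      rw [hrw]
      calc (n.choose j:ℝ) * (r^n * (r^j)⁻¹) * ‖(g₀ ^ j) v‖
          ≤ (n:ℝ)^(s-1) * (r^n * (r^j)⁻¹) * ‖(g₀ ^ j) v‖ := by
            refine mul_le_mul_of_nonneg_right (mul_le_mul_of_nonneg_right hch ?_) (norm_nonneg _)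
            positivity
        _ = (n:ℝ)^(s-1) * r^n * ((r^j)⁻¹ * ‖(g₀^j) v‖) := by ring
    have htri : ‖T‖ - ‖R‖ ≤ ‖(f ^ n) v‖ := by
      rw [hexp]
      have h2 := norm_sub_norm_le T (-R)
      rw [sub_neg_eq_add, norm_neg] at h2
      calc ‖T‖ - ‖R‖ ≤ ‖T + R‖ := h2
        _ = ‖R + T‖ := by rw [add_comm]
    have h2 : c₁ * (n:ℝ)^s * r^n ≤ ‖(f ^ n) v‖ := by
      calc c₁ * (n:ℝ)^s * r^n
          ≤ (n.choose s : ℝ) * r^(n-s) * ‖(g₀ ^ s) v‖ - (n:ℝ)^(s-1) * r^n * D := hc₁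
        _ ≤ ‖T‖ - ‖R‖ := by rw [hTnorm]; linarith
        _ ≤ ‖(f ^ n) v‖ := htri
    have h3 : ‖(f ^ n) v‖ ≤ ‖φ ^ n‖ * ‖v‖ := by
      have h4 := (φ ^ n).le_opNorm v
      have h5 : (φ ^ n) v = (f ^ n) v := by
        rw [show (f ^ n) v = ((φ ^ n : V →L[ℂ] V) : V →ₗ[ℂ] V) v from by rw [clm_pow_coe]]
        rfl
      rwa [h5] at h4
    rw [div_mul_eq_mul_div, div_mul_eq_mul_div, div_le_iff₀ hvpos]
    calc c₁ * (n:ℝ)^s * r^n ≤ ‖(f^n) v‖ := h2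
      _ ≤ ‖φ^n‖ * ‖v‖ := h3
  -- assemble
  rw [eventually_atTop] at hupper hlower
  obtain ⟨N₁, hN₁⟩ := hupper
  obtain ⟨N₂, hN₂⟩ := hlower
  have hcpos : 0 < c₁ / ‖v‖ := div_pos hc₁pos hvpos
  have hcC : c₁ / ‖v‖ ≤ C₀ := by
    set n := max (max N₁ N₂) 1 with hn
    have h1 := hN₂ n (by omega)
    have h2 := hN₁ n (by omega)
    have hn0 : 0 < n := by omega
    have hnR : (0:ℝ) < (n:ℝ) := by exact_mod_cast hn0
    have hX : 0 < (n:ℝ)^s * r^n := by positivity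
    have h3 : (c₁ / ‖v‖) * ((n:ℝ)^s * r^n) ≤ C₀ * ((n:ℝ)^s * r^n) := by
      calc (c₁ / ‖v‖) * ((n:ℝ)^s * r^n) = (c₁ / ‖v‖) * (n:ℝ)^s * r^n := by ring
        _ ≤ ‖φ^n‖ := h1
        _ ≤ C₀ * (n:ℝ)^s * r^n := h2
        _ = C₀ * ((n:ℝ)^s * r^n) := by ring
    exact le_of_mul_le_mul_right h3 hX
  refine ⟨c₁ / ‖v‖, C₀, max (max N₁ N₂) 1, hcpos, hcC, ?_⟩
  intro n hn
  have h2 := hN₁ n (by omega)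
  have h1 := hN₂ n (by omega)
  have hrn : (0:ℝ) < r^n := pow_pos hrpos n
  constructor
  · rw [le_div_iff₀ hrn]
    exact h1
  · rw [div_le_iff₀ hrn]
    exact h2
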